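/- Let E be a real Banach space, α ∈ (0,1), B(α) = 1 − α + α/Γ(α), let g : E → E be Lipschitz continuous with constant C ≥ 0, let φ_c ∈ E, and let T₁ > 0 satisfy C · ( (1−α)/B(α) + T₁^α/(B(α)Γ(α)) ) < 1. Then there exists a unique continuous function φ : [0,T₁] → E such that for all t ∈ [0,T₁], φ(t) = φ_c + ((1−α)/B(α)) g(φ(t)) + (α/(B(α)Γ(α))) ∫_0^t (t−s)^{α−1} g(φ(s)) ds. -/

import Mathlib

open Set MeasureTheory intervalIntegral


section helpers
variable {E : Type*} [NormedAddCommGroup E] [NormedSpace ℝ E]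

lemma ab_kerInt {α : ℝ} (hα : 0 < α) (c a b : ℝ) :
    IntervalIntegrable (fun s => (c - s) ^ (α - 1)) volume a b := by
  have h := (intervalIntegral.intervalIntegrable_rpow' (a := c - a) (b := c - b)
      (r := α - 1) (by linarith)).comp_sub_left c
  simpa using h

lemma ab_kerEval {α : ℝ} (hα : 0 < α) (c a b : ℝ) :
    (∫ s in a..b, (c - s) ^ (α - 1)) = ((c - a) ^ α - (c - b) ^ α) / α := by
  rw [intervalIntegral.integral_comp_sub_left (fun x : ℝ => x ^ (α - 1)) c,
    integral_rpow (Or.inl (by linarith)), sub_add_cancel]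

lemma ab_kerBound {α : ℝ} (hα : 0 < α) {a b c M : ℝ} (hab : a ≤ b) (hbc : b ≤ c)
    (hM0 : 0 ≤ M) {h : ℝ → E} (hM : ∀ s ∈ Set.Ioc a b, ‖h s‖ ≤ M) :
    ‖∫ s in a..b, (c - s) ^ (α - 1) • h s‖ ≤ ((c - a) ^ α - (c - b) ^ α) / α * M := by
  have key : ‖∫ s in a..b, (c - s) ^ (α - 1) • h s‖
      ≤ |∫ s in a..b, (c - s) ^ (α - 1) * M| := by
    refine intervalIntegral.norm_integral_le_abs_of_norm_le ?_ ((ab_kerInt hα c a b).mul_const M)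
    filter_upwards [MeasureTheory.ae_restrict_mem measurableSet_uIoc] with s hs
    rw [Set.uIoc_of_le hab] at hs
    have hcs : (0:ℝ) ≤ c - s := by linarith [hs.2]
    rw [norm_smul, Real.norm_eq_abs, abs_of_nonneg (Real.rpow_nonneg hcs _)]
    exact mul_le_mul_of_nonneg_left (hM s hs) (Real.rpow_nonneg hcs _)
  rw [intervalIntegral.integral_mul_const, ab_kerEval hα] at key
  have h1 : (c - b) ^ α ≤ (c - a) ^ α :=
    Real.rpow_le_rpow (by linarith) (by linarith) hα.le
  rwa [abs_of_nonneg (mul_nonneg (div_nonneg (by linarith) hα.le) hM0)] at key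

lemma ab_kerSmulInt {α : ℝ} (hα : 0 < α) {c a b : ℝ} {h : ℝ → E}
    (hc : ContinuousOn h (Set.uIcc a b)) :
    IntervalIntegrable (fun s => (c - s) ^ (α - 1) • h s) volume a b := by
  have h1 : IntegrableOn (fun s => (c - s) ^ (α - 1)) (Set.uIcc a b) volume := by
    rw [Set.uIcc]
    refine (integrableOn_Icc_iff_integrableOn_Ioc (ha := enorm_ne_top)).2 ?_
    have h2 := (ab_kerInt hα c a b).def'
    rwa [Set.uIoc] at h2
  have h2 := h1.smul_continuousOn hc isCompact_uIcc
  exact (intervalIntegrable_iff).2 (h2.mono_set Set.uIoc_subset_uIcc)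

lemma ab_rpow_subadd {x y p : ℝ} (hx : 0 ≤ x) (hy : 0 ≤ y) (hp : 0 ≤ p) (hp1 : p ≤ 1) :
    (x + y) ^ p ≤ x ^ p + y ^ p := by
  have h := NNReal.coe_le_coe.2 (NNReal.rpow_add_le_add_rpow x.toNNReal y.toNNReal hp hp1)
  push_cast at h
  rwa [Real.coe_toNNReal _ hx, Real.coe_toNNReal _ hy] at h

lemma ab_holder {α : ℝ} (hα : 0 < α) (hα1 : α ≤ 1) {h : ℝ → E} (hc : Continuous h) {M : ℝ}
    (hM : ∀ s, ‖h s‖ ≤ M) {t t' : ℝ} (ht : 0 ≤ t) (htt : t ≤ t') :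
    ‖(∫ s in (0:ℝ)..t', (t' - s) ^ (α - 1) • h s) -
        ∫ s in (0:ℝ)..t, (t - s) ^ (α - 1) • h s‖ ≤ 2 * M * (t' - t) ^ α / α := by
  have hM0 : 0 ≤ M := (norm_nonneg _).trans (hM 0)
  have i1 : IntervalIntegrable (fun s => (t' - s) ^ (α - 1) • h s) volume 0 t :=
    ab_kerSmulInt hα hc.continuousOn
  have i2 : IntervalIntegrable (fun s => (t' - s) ^ (α - 1) • h s) volume t t' :=
    ab_kerSmulInt hα hc.continuousOn
  have i3 : IntervalIntegrable (fun s => (t - s) ^ (α - 1) • h s) volume 0 t :=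
    ab_kerSmulInt hα hc.continuousOn
  have split := intervalIntegral.integral_add_adjacent_intervals i1 i2
  have e1 : (∫ s in (0:ℝ)..t, (t' - s) ^ (α - 1) • h s)
        - ∫ s in (0:ℝ)..t, (t - s) ^ (α - 1) • h s
      = ∫ s in (0:ℝ)..t, ((t' - s) ^ (α - 1) - (t - s) ^ (α - 1)) • h s := by
    rw [← intervalIntegral.integral_sub i1 i3]
    congr 1
    funext s
    rw [sub_smul]
  have key : (∫ s in (0:ℝ)..t', (t' - s) ^ (α - 1) • h s)
        - ∫ s in (0:ℝ)..t, (t - s) ^ (α - 1) • h s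
      = (∫ s in (0:ℝ)..t, ((t' - s) ^ (α - 1) - (t - s) ^ (α - 1)) • h s)
        + ∫ s in t..t', (t' - s) ^ (α - 1) • h s := by
    rw [← e1, ← split]; abel
  rw [key]
  have b2 : ‖∫ s in t..t', (t' - s) ^ (α - 1) • h s‖ ≤ (t' - t) ^ α / α * M := by
    have hb := ab_kerBound hα htt le_rfl hM0 (h := h) (fun s _ => hM s)
    simpa [Real.zero_rpow hα.ne'] using hb
  have b1 : ‖∫ s in (0:ℝ)..t, ((t' - s) ^ (α - 1) - (t - s) ^ (α - 1)) • h s‖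
      ≤ (t' - t) ^ α / α * M := by
    have b1' : ‖∫ s in (0:ℝ)..t, ((t' - s) ^ (α - 1) - (t - s) ^ (α - 1)) • h s‖
        ≤ |∫ s in (0:ℝ)..t, ((t - s) ^ (α - 1) - (t' - s) ^ (α - 1)) * M| := by
      refine intervalIntegral.norm_integral_le_abs_of_norm_le ?_
        (((ab_kerInt hα t 0 t).sub (ab_kerInt hα t' 0 t)).mul_const M)
      have hne : ∀ᵐ s ∂(volume.restrict (Set.uIoc (0:ℝ) t)), s ≠ t := by
        refine ae_restrict_of_ae ?_
        rw [MeasureTheory.ae_iff]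
        have : {s : ℝ | ¬ s ≠ t} = {t} := by ext s; simp
        rw [this]
        exact Real.volume_singleton
      filter_upwards [MeasureTheory.ae_restrict_mem measurableSet_uIoc, hne] with s hs hst
      rw [Set.uIoc_of_le ht] at hs
      have hslt : s < t := lt_of_le_of_ne hs.2 hst
      have h2 : (t' - s) ^ (α - 1) ≤ (t - s) ^ (α - 1) :=
        Real.rpow_le_rpow_of_nonpos (by linarith) (by linarith) (by linarith)
      have h3 : (0:ℝ) ≤ (t - s) ^ (α - 1) - (t' - s) ^ (α - 1) := by linarith
      rw [norm_smul, Real.norm_eq_abs, abs_sub_comm, abs_of_nonneg h3]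
      exact mul_le_mul_of_nonneg_left (hM s) h3
    rw [intervalIntegral.integral_mul_const,
      intervalIntegral.integral_sub (ab_kerInt hα t 0 t) (ab_kerInt hα t' 0 t),
      ab_kerEval hα, ab_kerEval hα] at b1'
    simp only [sub_zero, sub_self, Real.zero_rpow hα.ne'] at b1'
    have hsub : t' ^ α ≤ t ^ α + (t' - t) ^ α := by
      have := ab_rpow_subadd ht (sub_nonneg.2 htt) hα.le hα1
      rwa [add_sub_cancel] at this
    have hmono : t ^ α ≤ t' ^ α := Real.rpow_le_rpow ht htt hα.le
    have hXnn : (0:ℝ) ≤ t ^ α / α - (t' ^ α - (t' - t) ^ α) / α := by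
      rw [div_sub_div_same]
      exact div_nonneg (by linarith) hα.le
    rw [abs_of_nonneg (mul_nonneg hXnn hM0)] at b1'
    refine b1'.trans ?_
    have hXle : t ^ α / α - (t' ^ α - (t' - t) ^ α) / α ≤ (t' - t) ^ α / α := by
      rw [div_sub_div_same]
      exact (div_le_div_iff_of_pos_right hα).2 (by linarith)
    exact mul_le_mul_of_nonneg_right hXle hM0
  calc ‖(∫ s in (0:ℝ)..t, ((t' - s) ^ (α - 1) - (t - s) ^ (α - 1)) • h s)
        + ∫ s in t..t', (t' - s) ^ (α - 1) • h s‖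
      ≤ (t' - t) ^ α / α * M + (t' - t) ^ α / α * M := (norm_add_le _ _).trans (add_le_add b1 b2)
    _ = 2 * M * (t' - t) ^ α / α := by ring

lemma ab_contF {α : ℝ} (hα : 0 < α) (hα1 : α ≤ 1) {h : ℝ → E} (hc : Continuous h) {M : ℝ}
    (hM : ∀ s, ‖h s‖ ≤ M) :
    ContinuousOn (fun t => ∫ s in (0:ℝ)..t, (t - s) ^ (α - 1) • h s) (Set.Ici 0) := by
  set F : ℝ → E := fun t => ∫ s in (0:ℝ)..t, (t - s) ^ (α - 1) • h s with hF
  intro t₀ ht₀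
  have hb : ∀ t ∈ Set.Ici (0:ℝ), dist (F t) (F t₀) ≤ 2 * M * |t - t₀| ^ α / α := by
    intro t ht
    rcases le_total t t₀ with h' | h'
    · rw [dist_comm, dist_eq_norm, abs_sub_comm, abs_of_nonneg (sub_nonneg.2 h')]
      exact ab_holder hα hα1 hc hM ht h'
    · rw [dist_eq_norm, abs_of_nonneg (sub_nonneg.2 h')]
      exact ab_holder hα hα1 hc hM ht₀ h'
  have h1 : Filter.Tendsto (fun t : ℝ => |t - t₀|) (nhdsWithin t₀ (Set.Ici 0)) (nhds 0) := by
    have hcont : Continuous (fun t : ℝ => |t - t₀|) := (continuous_id.sub continuous_const).abs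
    have := hcont.tendsto t₀
    simp only [sub_self, abs_zero] at this
    exact this.mono_left nhdsWithin_le_nhds
  have h2 : Filter.Tendsto (fun t : ℝ => 2 * M * |t - t₀| ^ α / α)
      (nhdsWithin t₀ (Set.Ici 0)) (nhds 0) := by
    have h3 := (Real.continuousAt_rpow_const 0 α (Or.inr hα.le)).tendsto.comp h1
    rw [Real.zero_rpow hα.ne'] at h3
    have h4 := (h3.const_mul (2 * M)).div_const α
    simpa using h4
  have h5 : Filter.Tendsto (fun t => dist (F t) (F t₀)) (nhdsWithin t₀ (Set.Ici 0)) (nhds 0) := by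
    refine squeeze_zero' ?_ ?_ h2
    · exact Filter.Eventually.of_forall fun t => dist_nonneg
    · exact eventually_mem_nhdsWithin.mono fun t ht => hb t ht
  exact tendsto_iff_dist_tendsto_zero.2 h5

end helpers

/-- Existence and uniqueness of a continuous solution `φ : [0,T₁] → E` of the
Atangana–Baleanu fractional integral equation
`φ(t) = φ_c + ((1−α)/B(α)) g(φ(t)) + (α/(B(α)Γ(α))) ∫_0^t (t−s)^{α−1} g(φ(s)) ds`,
when `g` is Lipschitz with constant `C` and
`C((1−α)/B(α) + T₁^α/(B(α)Γ(α))) < 1`. -/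
theorem ab_integral_equation_existence_uniqueness
    {E : Type*} [NormedAddCommGroup E] [NormedSpace ℝ E] [CompleteSpace E]
    (α : ℝ) (hα : α ∈ Set.Ioo (0 : ℝ) 1)
    (B : ℝ) (hB : B = 1 - α + α / Real.Gamma α)
    (g : E → E) (C : ℝ) (hC : 0 ≤ C)
    (hg : ∀ x y : E, ‖g x - g y‖ ≤ C * ‖x - y‖)
    (φc : E) (T₁ : ℝ) (hT₁ : 0 < T₁)
    (hsmall : C * ((1 - α) / B + T₁ ^ α / (B * Real.Gamma α)) < 1) :
    (∃ φ : ℝ → E, ContinuousOn φ (Set.Icc 0 T₁) ∧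
        ∀ t ∈ Set.Icc (0 : ℝ) T₁,
          φ t = φc + ((1 - α) / B) • g (φ t)
            + (α / (B * Real.Gamma α)) • ∫ s in (0 : ℝ)..t, (t - s) ^ (α - 1) • g (φ s)) ∧
      (∀ φ₁ φ₂ : ℝ → E, ContinuousOn φ₁ (Set.Icc 0 T₁) → ContinuousOn φ₂ (Set.Icc 0 T₁) →
        (∀ t ∈ Set.Icc (0 : ℝ) T₁,
          φ₁ t = φc + ((1 - α) / B) • g (φ₁ t)
            + (α / (B * Real.Gamma α)) • ∫ s in (0 : ℝ)..t, (t - s) ^ (α - 1) • g (φ₁ s)) →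
        (∀ t ∈ Set.Icc (0 : ℝ) T₁,
          φ₂ t = φc + ((1 - α) / B) • g (φ₂ t)
            + (α / (B * Real.Gamma α)) • ∫ s in (0 : ℝ)..t, (t - s) ^ (α - 1) • g (φ₂ s)) →
        ∀ t ∈ Set.Icc (0 : ℝ) T₁, φ₁ t = φ₂ t) := by
  obtain ⟨hα0, hα1⟩ := hα
  set Γv := Real.Gamma α with hΓv
  have hΓ : 0 < Γv := Real.Gamma_pos_of_pos hα0
  have hBpos : 0 < B := by
    rw [hB]; have := div_pos hα0 hΓ; linarith
  have hBΓ : 0 < B * Γv := mul_pos hBpos hΓ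
  set k := C * ((1 - α) / B + T₁ ^ α / (B * Γv)) with hk
  have hk1 : k < 1 := hsmall
  have hk0 : 0 ≤ k :=
    mul_nonneg hC (add_nonneg (div_nonneg (by linarith) hBpos.le)
      (div_nonneg (Real.rpow_nonneg hT₁.le _) hBΓ.le))
  have gcont : Continuous g := by
    have hlip : LipschitzWith (Real.toNNReal C) g := by
      refine LipschitzWith.of_dist_le_mul fun x y => ?_
      rw [dist_eq_norm, dist_eq_norm]
      simpa [Real.coe_toNNReal C hC] using hg x y
    exact hlip.continuous
  -- the arithmetic estimate used twice
  have harith : ∀ t ∈ Set.Icc (0:ℝ) T₁, ∀ d : ℝ, 0 ≤ d →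
      (1 - α) / B * (C * d) + α / (B * Γv) * ((t ^ α - (0:ℝ) ^ α) / α * (C * d)) ≤ k * d := by
    intro t ht d hd0
    rw [Real.zero_rpow hα0.ne']
    have htα : t ^ α ≤ T₁ ^ α := Real.rpow_le_rpow ht.1 ht.2 hα0.le
    have e : α / (B * Γv) * ((t ^ α - 0) / α * (C * d)) = (C * d) * (t ^ α / (B * Γv)) := by
      field_simp
      ring
    rw [e]
    have hCd : 0 ≤ C * d := mul_nonneg hC hd0
    have h2 : (C * d) * (t ^ α / (B * Γv)) ≤ (C * d) * (T₁ ^ α / (B * Γv)) := by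
      gcongr
    calc (1 - α) / B * (C * d) + (C * d) * (t ^ α / (B * Γv))
        ≤ (1 - α) / B * (C * d) + (C * d) * (T₁ ^ α / (B * Γv)) := by linarith
      _ = C * ((1 - α) / B + T₁ ^ α / (B * Γv)) * d := by ring
      _ = k * d := by rw [hk]
  haveI : Nonempty (Set.Icc (0:ℝ) T₁) := ⟨⟨0, le_refl _, hT₁.le⟩⟩
  set proj : ℝ → Set.Icc (0:ℝ) T₁ := Set.projIcc 0 T₁ hT₁.le with hproj
  have bound : ∀ f : C(Set.Icc (0:ℝ) T₁, E), ∃ M, ∀ s : ℝ, ‖g (f (proj s))‖ ≤ M := by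
    intro f
    obtain ⟨x₀, -, hx₀⟩ := isCompact_univ.exists_isMaxOn Set.univ_nonempty
      ((continuous_norm.comp (gcont.comp f.continuous)).continuousOn)
    exact ⟨‖g (f x₀)‖, fun s => hx₀ (Set.mem_univ (proj s))⟩
  set T : C(Set.Icc (0:ℝ) T₁, E) → C(Set.Icc (0:ℝ) T₁, E) := fun f =>
    ⟨fun t => φc + ((1 - α) / B) • g (f (proj (t:ℝ)))
        + (α / (B * Γv)) • ∫ s in (0:ℝ)..(t:ℝ), ((t:ℝ) - s) ^ (α - 1) • g (f (proj s)), by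
      obtain ⟨M, hM⟩ := bound f
      have hFc : ContinuousOn
          (fun u : ℝ => ∫ s in (0:ℝ)..u, (u - s) ^ (α - 1) • g (f (proj s))) (Set.Ici 0) :=
        ab_contF hα0 hα1.le (gcont.comp (f.continuous.comp continuous_projIcc)) hM
      refine (continuous_const.add (continuous_const.smul (gcont.comp
        (f.continuous.comp (continuous_projIcc.comp continuous_subtype_val))))).add
        (continuous_const.smul ?_)
      exact hFc.comp_continuous continuous_subtype_val fun x => x.2.1⟩ with hT
  have hc₁nn : (0:ℝ) ≤ (1 - α) / B := div_nonneg (by linarith) hBpos.le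
  have hc₂nn : (0:ℝ) ≤ α / (B * Γv) := div_nonneg hα0.le hBΓ.le
  have hlipT : ∀ f₁ f₂, dist (T f₁) (T f₂) ≤ k * dist f₁ f₂ := by
    intro f₁ f₂
    rw [ContinuousMap.dist_le (mul_nonneg hk0 dist_nonneg)]
    rintro ⟨t, ht⟩
    set d := dist f₁ f₂ with hd
    have hd0 : 0 ≤ d := dist_nonneg
    have hpt : ∀ s : ℝ, ‖g (f₁ (proj s)) - g (f₂ (proj s))‖ ≤ C * d := by
      intro s
      refine (hg _ _).trans (mul_le_mul_of_nonneg_left ?_ hC)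
      rw [← dist_eq_norm]
      exact ContinuousMap.dist_apply_le_dist _
    have iint : ∀ f : C(Set.Icc (0:ℝ) T₁, E),
        IntervalIntegrable (fun s => (t - s) ^ (α - 1) • g (f (proj s))) MeasureTheory.volume 0 t :=
      fun f => ab_kerSmulInt hα0 (gcont.comp (f.continuous.comp continuous_projIcc)).continuousOn
    rw [dist_eq_norm]
    have hsub : (T f₁) ⟨t, ht⟩ - (T f₂) ⟨t, ht⟩
        = ((1 - α) / B) • (g (f₁ (proj t)) - g (f₂ (proj t)))
          + (α / (B * Γv)) • ∫ s in (0:ℝ)..t,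
              (t - s) ^ (α - 1) • (g (f₁ (proj s)) - g (f₂ (proj s))) := by
      simp only [hT, ContinuousMap.coe_mk]
      rw [show (fun s => (t - s) ^ (α - 1) • (g (f₁ (proj s)) - g (f₂ (proj s))))
          = fun s => (t - s) ^ (α - 1) • g (f₁ (proj s)) - (t - s) ^ (α - 1) • g (f₂ (proj s))
          from funext fun s => smul_sub _ _ _]
      rw [intervalIntegral.integral_sub (iint f₁) (iint f₂), smul_sub, smul_sub]
      abel
    rw [hsub]
    have hb₂ : ‖∫ s in (0:ℝ)..t, (t - s) ^ (α - 1) • (g (f₁ (proj s)) - g (f₂ (proj s)))‖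
        ≤ (t ^ α - (0:ℝ) ^ α) / α * (C * d) := by
      have hkb := ab_kerBound hα0 ht.1 (le_refl t) (mul_nonneg hC hd0)
        (h := fun s => g (f₁ (proj s)) - g (f₂ (proj s))) (fun s _ => hpt s)
      simpa using hkb
    calc ‖((1 - α) / B) • (g (f₁ (proj t)) - g (f₂ (proj t)))
          + (α / (B * Γv)) • ∫ s in (0:ℝ)..t,
              (t - s) ^ (α - 1) • (g (f₁ (proj s)) - g (f₂ (proj s)))‖
        ≤ (1 - α) / B * (C * d) + α / (B * Γv) * ((t ^ α - (0:ℝ) ^ α) / α * (C * d)) := by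
          refine (norm_add_le _ _).trans (add_le_add ?_ ?_)
          · rw [norm_smul, Real.norm_eq_abs, abs_of_nonneg hc₁nn]
            exact mul_le_mul_of_nonneg_left (hpt t) hc₁nn
          · rw [norm_smul, Real.norm_eq_abs, abs_of_nonneg hc₂nn]
            exact mul_le_mul_of_nonneg_left hb₂ hc₂nn
      _ ≤ k * d := harith t ht d hd0
  have hcontr : ContractingWith ⟨k, hk0⟩ T := by
    constructor
    · exact_mod_cast hk1
    · exact LipschitzWith.of_dist_le_mul hlipT
  haveI : Nonempty C(Set.Icc (0:ℝ) T₁, E) := ⟨ContinuousMap.const _ φc⟩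
  set f := ContractingWith.fixedPoint T hcontr with hf
  have hfix : T f = f := hcontr.fixedPoint_isFixedPt
  constructor
  · refine ⟨fun s => f (proj s), (f.continuous.comp continuous_projIcc).continuousOn, ?_⟩
    intro t ht
    have h1 : proj t = ⟨t, ht⟩ := Set.projIcc_of_mem hT₁.le ht
    show f (proj t) = _
    rw [h1]
    conv_lhs => rw [← hfix]
    simp only [hT, ContinuousMap.coe_mk]
  · intro φ₁ φ₂ hcφ₁ hcφ₂ he₁ he₂
    set ψ := fun t => ‖φ₁ t - φ₂ t‖ with hψ
    have hcψ : ContinuousOn ψ (Set.Icc 0 T₁) := (hcφ₁.sub hcφ₂).norm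
    obtain ⟨t₀, ht₀, hmax⟩ := isCompact_Icc.exists_isMaxOn
      (Set.nonempty_Icc.2 hT₁.le) hcψ
    set d := ψ t₀ with hdd
    have hd0 : 0 ≤ d := norm_nonneg _
    have key : ∀ t ∈ Set.Icc (0:ℝ) T₁, ψ t ≤ k * d := by
      intro t ht
      have iint : ∀ φ : ℝ → E, ContinuousOn φ (Set.Icc 0 T₁) →
          IntervalIntegrable (fun s => (t - s) ^ (α - 1) • g (φ s)) MeasureTheory.volume 0 t := by
        intro φ hφ
        refine ab_kerSmulInt hα0 ?_
        rw [Set.uIcc_of_le ht.1]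
        exact gcont.comp_continuousOn (hφ.mono (Set.Icc_subset_Icc_right ht.2))
      have hpt : ∀ s ∈ Set.Ioc (0:ℝ) t, ‖g (φ₁ s) - g (φ₂ s)‖ ≤ C * d := by
        intro s hs
        refine (hg _ _).trans (mul_le_mul_of_nonneg_left ?_ hC)
        exact hmax ⟨hs.1.le, hs.2.trans ht.2⟩
      have hsub : φ₁ t - φ₂ t = ((1 - α) / B) • (g (φ₁ t) - g (φ₂ t))
          + (α / (B * Γv)) • ∫ s in (0:ℝ)..t, (t - s) ^ (α - 1) • (g (φ₁ s) - g (φ₂ s)) := by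
        conv_lhs => rw [he₁ t ht, he₂ t ht]
        rw [show (fun s => (t - s) ^ (α - 1) • (g (φ₁ s) - g (φ₂ s)))
            = fun s => (t - s) ^ (α - 1) • g (φ₁ s) - (t - s) ^ (α - 1) • g (φ₂ s)
            from funext fun s => smul_sub _ _ _]
        rw [intervalIntegral.integral_sub (iint φ₁ hcφ₁) (iint φ₂ hcφ₂), smul_sub, smul_sub]
        abel
      have hb₂ : ‖∫ s in (0:ℝ)..t, (t - s) ^ (α - 1) • (g (φ₁ s) - g (φ₂ s))‖
          ≤ (t ^ α - (0:ℝ) ^ α) / α * (C * d) := by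
        have hkb := ab_kerBound hα0 ht.1 (le_refl t) (mul_nonneg hC hd0)
          (h := fun s => g (φ₁ s) - g (φ₂ s)) hpt
        simpa using hkb
      have hgt : ‖g (φ₁ t) - g (φ₂ t)‖ ≤ C * d :=
        (hg _ _).trans (mul_le_mul_of_nonneg_left (hmax ht) hC)
      calc ψ t = ‖((1 - α) / B) • (g (φ₁ t) - g (φ₂ t))
            + (α / (B * Γv)) • ∫ s in (0:ℝ)..t,
                (t - s) ^ (α - 1) • (g (φ₁ s) - g (φ₂ s))‖ := by show ‖φ₁ t - φ₂ t‖ = _; rw [hsub]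
        _ ≤ (1 - α) / B * (C * d) + α / (B * Γv) * ((t ^ α - (0:ℝ) ^ α) / α * (C * d)) := by
            refine (norm_add_le _ _).trans (add_le_add ?_ ?_)
            · rw [norm_smul, Real.norm_eq_abs, abs_of_nonneg hc₁nn]
              exact mul_le_mul_of_nonneg_left hgt hc₁nn
            · rw [norm_smul, Real.norm_eq_abs, abs_of_nonneg hc₂nn]
              exact mul_le_mul_of_nonneg_left hb₂ hc₂nn
        _ ≤ k * d := harith t ht d hd0
    have hdk : d ≤ k * d := key t₀ ht₀
    have hdz : d = 0 := le_antisymm (by nlinarith) hd0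
    intro t ht
    have h1 : ψ t ≤ 0 := (key t ht).trans (by rw [hdz, mul_zero])
    have h2 : ψ t = 0 := le_antisymm h1 (norm_nonneg _)
    exact sub_eq_zero.1 (norm_eq_zero.1 h2)
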